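/- Suppose β > 0. (i) If x ∈ ℂⁿ is nonzero, σ ∈ ℂ with σ ≠ 1, and A x = σ M x, then (L - iB)x = λ K x with λ = (1 - σ(1+iβ))/(1 - σ). (ii) Conversely, if x ∈ ℂⁿ is nonzero, λ ∈ ℂ with λ ≠ 1 + iβ, and (L - iB)x = λ K x, then A x = σ M x with σ = (λ - 1)/(λ - (1+iβ)). -/
import Mathlib


open Matrix

/-- **Correspondence between eigenpairs of `A x = σ M x` and the pencil `(L - iB, K)`.**
With `A = L - iB - K` and `M = L - iB - (1+iβ)K`, `β > 0`:
(i) if `A x = σ M x` with `x ≠ 0` and `σ ≠ 1`, then `(L - iB) x = λ K x` with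
`λ = (1 - σ(1+iβ))/(1 - σ)`; (ii) conversely, if `(L - iB) x = λ K x` with `x ≠ 0`
and `λ ≠ 1 + iβ`, then `A x = σ M x` with `σ = (λ - 1)/(λ - (1+iβ))`. -/
theorem eigenpair_correspondence {n : ℕ}
    (L B K : Matrix (Fin n) (Fin n) ℝ)
    (hL : L.PosSemidef) (hB : B.PosSemidef) (hK : K.PosDef)
    (β : ℝ) (hβ : 0 < β)
    (A M : Matrix (Fin n) (Fin n) ℂ)
    (hA : A = L.map Complex.ofReal - Complex.I • B.map Complex.ofReal
              - K.map Complex.ofReal)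
    (hM : M = L.map Complex.ofReal - Complex.I • B.map Complex.ofReal
              - ((1 : ℂ) + Complex.I * (β : ℂ)) • K.map Complex.ofReal) :
    (∀ (x : Fin n → ℂ), x ≠ 0 → ∀ σ : ℂ, σ ≠ 1 →
        A.mulVec x = σ • M.mulVec x →
        (L.map Complex.ofReal - Complex.I • B.map Complex.ofReal).mulVec x
          = ((1 - σ * (1 + Complex.I * (β : ℂ))) / (1 - σ))
              • (K.map Complex.ofReal).mulVec x) ∧
    (∀ (x : Fin n → ℂ), x ≠ 0 → ∀ lam : ℂ, lam ≠ 1 + Complex.I * (β : ℂ) →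
        (L.map Complex.ofReal - Complex.I • B.map Complex.ofReal).mulVec x
          = lam • (K.map Complex.ofReal).mulVec x →
        A.mulVec x
          = ((lam - 1) / (lam - (1 + Complex.I * (β : ℂ)))) • M.mulVec x) := by
  subst hA hM
  constructor
  · intro x hx σ hσ h
    funext i
    have h' := congrFun h i
    simp only [Matrix.sub_mulVec, Matrix.smul_mulVec, Pi.sub_apply, Pi.smul_apply,
      smul_eq_mul] at h' ⊢
    have h1 : (1 : ℂ) - σ ≠ 0 := sub_ne_zero.mpr (Ne.symm hσ)
    field_simp
    linear_combination h'
  · intro x hx lam hlam h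
    funext i
    have h' := congrFun h i
    simp only [Matrix.sub_mulVec, Matrix.smul_mulVec, Pi.sub_apply, Pi.smul_apply,
      smul_eq_mul] at h' ⊢
    have h1 : lam - (1 + Complex.I * (β : ℂ)) ≠ 0 := sub_ne_zero.mpr hlam
    field_simp
    linear_combination (-(Complex.I * (β : ℂ))) * h'
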